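/- Exponential work distributions: let μ₀ > 0 and define p₀(w) = (1/μ₀)e^{−w/μ₀} and p₁(w) = (1/μ₁)e^{−w/μ₁} on Ω = (0,∞) with μ₁ = μ₀/(1+μ₀). Then the fluctuation theorem p₀(w) = e^{w−Δf} p₁(w) holds on Ω with Δf = ln(1+μ₀), and the boundary values of the rescaled asymptotic mean square error are M(1) = Var₀(e^{−(w−Δf)}) = μ₀²/(1+2μ₀) and, provided μ₀ < 1, M(0) = Var₁(e^{w−Δf}) = μ₀²/(1−μ₀²); in particular M(0) > M(1) for all 0 < μ₀ < 1. -/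

import Mathlib

open MeasureTheory Real Set

open Filter

lemma myIntegrable {a : ℝ} (ha : 0 < a) :
    IntegrableOn (fun w => Real.exp (-(a*w))) (Ioi (0:ℝ)) := by
  simpa [neg_mul] using exp_neg_integrableOn_Ioi 0 ha

lemma myIntegral {a : ℝ} (ha : 0 < a) :
    ∫ w in Ioi (0:ℝ), Real.exp (-(a*w)) = 1/a := by
  have hd : ∀ x ∈ Ici (0:ℝ),
      HasDerivAt (fun w => -(1/a) * Real.exp (-(a*w))) (Real.exp (-(a*x))) x := by
    intro x _
    have h := (((hasDerivAt_id x).const_mul (-a)).exp).const_mul (-(1/a))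
    have hfun : (fun w => -(1/a) * Real.exp (-a * id w)) =
        (fun w => -(1/a) * Real.exp (-(a*w))) := by
      funext w; simp [neg_mul]
    rw [hfun] at h
    refine h.congr_deriv ?_
    simp only [id]
    field_simp
  have ht : Tendsto (fun w => -(1/a) * Real.exp (-(a*w))) atTop (nhds 0) := by
    have h1 : Tendsto (fun w : ℝ => a * w) atTop atTop :=
      Tendsto.const_mul_atTop ha tendsto_id
    have h2 : Tendsto (fun w : ℝ => Real.exp (-(a*w))) atTop (nhds 0) :=
      Real.tendsto_exp_neg_atTop_nhds_zero.comp h1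
    simpa using h2.const_mul (-(1/a))
  have := integral_Ioi_of_hasDerivAt_of_tendsto' hd (myIntegrable ha) ht
  simp at this
  rw [this]; ring

lemma myCombo {a b c : ℝ} (A B C : ℝ) (ha : 0 < a) (hb : 0 < b) (hc : 0 < c) :
    ∫ w in Ioi (0:ℝ),
      (A * Real.exp (-(a*w)) + B * Real.exp (-(b*w)) + C * Real.exp (-(c*w)))
      = A/a + B/b + C/c := by
  have h1 : IntegrableOn (fun w => A * Real.exp (-(a*w))) (Ioi (0:ℝ)) :=
    (myIntegrable ha).const_mul A
  have h2 : IntegrableOn (fun w => B * Real.exp (-(b*w))) (Ioi (0:ℝ)) :=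
    (myIntegrable hb).const_mul B
  have h3 : IntegrableOn (fun w => C * Real.exp (-(c*w))) (Ioi (0:ℝ)) :=
    (myIntegrable hc).const_mul C
  have h12 : IntegrableOn (fun w => A * Real.exp (-(a*w)) + B * Real.exp (-(b*w)))
      (Ioi (0:ℝ)) := h1.add h2
  rw [integral_add h12 h3, integral_add h1 h2,
    MeasureTheory.integral_const_mul, MeasureTheory.integral_const_mul, MeasureTheory.integral_const_mul,
    myIntegral ha, myIntegral hb, myIntegral hc]
  ring

/-- The mean `⟨g⟩_q = ∫_Ω g q` of `g` with respect to the density `q` on `Ω`. -/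
noncomputable def wMean (Ω : Set ℝ) (q g : ℝ → ℝ) : ℝ :=
  ∫ w in Ω, g w * q w

/-- The variance `Var_q(g) = ⟨(g - ⟨g⟩_q)²⟩_q` of `g` with respect to the density `q`
on `Ω`. -/
noncomputable def wVar (Ω : Set ℝ) (q g : ℝ → ℝ) : ℝ :=
  ∫ w in Ω, (g w - wMean Ω q g) ^ 2 * q w

/-- Exponential work distributions: let `μ₀ > 0`, `p₀ w = (1/μ₀) e^{-w/μ₀}`,
`p₁ w = (1/μ₁) e^{-w/μ₁}` on `Ω = (0,∞)` with `μ₁ = μ₀/(1+μ₀)`. Then the fluctuation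
theorem `p₀ w = e^{w-Δf} p₁ w` holds on `Ω` with `Δf = ln(1+μ₀)`, and the boundary
values of the rescaled asymptotic mean square error are
`M(1) = Var₀(e^{-(w-Δf)}) = μ₀²/(1+2μ₀)` and, for `μ₀ < 1`,
`M(0) = Var₁(e^{w-Δf}) = μ₀²/(1-μ₀²)`; in particular `M(0) > M(1)` for `0 < μ₀ < 1`. -/
theorem exponential_work_distributions
    (μ₀ μ₁ Δf : ℝ) (hμ₀ : 0 < μ₀)
    (hμ₁ : μ₁ = μ₀ / (1 + μ₀)) (hΔf : Δf = Real.log (1 + μ₀))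
    (p₀ p₁ : ℝ → ℝ)
    (hp₀ : ∀ w, p₀ w = (1 / μ₀) * Real.exp (-w / μ₀))
    (hp₁ : ∀ w, p₁ w = (1 / μ₁) * Real.exp (-w / μ₁)) :
    (∀ w ∈ Ioi (0:ℝ), p₀ w = Real.exp (w - Δf) * p₁ w) ∧
    wVar (Ioi 0) p₀ (fun w => Real.exp (-(w - Δf))) = μ₀ ^ 2 / (1 + 2 * μ₀) ∧
    (μ₀ < 1 →
      wVar (Ioi 0) p₁ (fun w => Real.exp (w - Δf)) = μ₀ ^ 2 / (1 - μ₀ ^ 2)) ∧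
    (μ₀ < 1 →
      wVar (Ioi 0) p₀ (fun w => Real.exp (-(w - Δf)))
        < wVar (Ioi 0) p₁ (fun w => Real.exp (w - Δf))) := by
  have h1μ : (0:ℝ) < 1 + μ₀ := by linarith
  have hμne : μ₀ ≠ 0 := ne_of_gt hμ₀
  have h1μne : (1:ℝ) + μ₀ ≠ 0 := ne_of_gt h1μ
  have hexpΔf : Real.exp Δf = 1 + μ₀ := by rw [hΔf, Real.exp_log h1μ]
  have hμ₁inv : 1/μ₁ = (1+μ₀)/μ₀ := by rw [hμ₁]; field_simp
  have hesplit : ∀ w : ℝ, Real.exp (-w/μ₁) = Real.exp (-w) * Real.exp (-w/μ₀) := by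
    intro w
    rw [← Real.exp_add]
    congr 1
    rw [hμ₁]
    field_simp
    ring
  -- Fluctuation theorem
  have hFT : ∀ w ∈ Ioi (0:ℝ), p₀ w = Real.exp (w - Δf) * p₁ w := by
    intro w _
    rw [hp₀, hp₁, hesplit, Real.exp_sub, hexpΔf, hμ₁inv, Real.exp_neg]
    field_simp
  -- mean for p₀
  have hpos1 : (0:ℝ) < 1 + 1/μ₀ := by positivity
  have hmean₀ : wMean (Ioi 0) p₀ (fun w => Real.exp (-(w - Δf))) = 1 := by
    unfold wMean
    have hrw : ∀ w : ℝ, Real.exp (-(w - Δf)) * p₀ w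
        = ((1+μ₀)/μ₀) * Real.exp (-((1+1/μ₀)*w)) := by
      intro w
      rw [hp₀, show -(w-Δf) = Δf + -w by ring, Real.exp_add, hexpΔf,
        show -((1+1/μ₀)*w) = -w + -w/μ₀ by ring, Real.exp_add]
      ring
    simp only [hrw]
    rw [MeasureTheory.integral_const_mul, myIntegral hpos1]
    field_simp
    ring
  -- variance for p₀
  have hpos2 : (0:ℝ) < 2 + 1/μ₀ := by positivity
  have hpos3 : (0:ℝ) < 1/μ₀ := by positivity
  have hvar₀ : wVar (Ioi 0) p₀ (fun w => Real.exp (-(w - Δf)))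
      = μ₀ ^ 2 / (1 + 2 * μ₀) := by
    unfold wVar
    rw [hmean₀]
    have hrw : ∀ w : ℝ, (Real.exp (-(w - Δf)) - 1)^2 * p₀ w
        = ((1+μ₀)^2/μ₀) * Real.exp (-((2+1/μ₀)*w))
          + (-(2*(1+μ₀)/μ₀)) * Real.exp (-((1+1/μ₀)*w))
          + (1/μ₀) * Real.exp (-((1/μ₀)*w)) := by
      intro w
      rw [hp₀, show -(w-Δf) = Δf + -w by ring, Real.exp_add, hexpΔf,
        show -((2+1/μ₀)*w) = (-w + -w) + -w/μ₀ by ring,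
        show -((1+1/μ₀)*w) = -w + -w/μ₀ by ring,
        show -((1/μ₀)*w) = -w/μ₀ by ring,
        Real.exp_add, Real.exp_add, Real.exp_add]
      ring
    simp only [hrw]
    rw [myCombo ((1+μ₀)^2/μ₀) (-(2*(1+μ₀)/μ₀)) (1/μ₀) hpos2 hpos1 hpos3]
    have h12 : (1:ℝ) + 2*μ₀ ≠ 0 := by positivity
    field_simp
    ring
  -- mean for p₁
  have hmean₁ : wMean (Ioi 0) p₁ (fun w => Real.exp (w - Δf)) = 1 := by
    unfold wMean
    have hrw : ∀ w : ℝ, Real.exp (w - Δf) * p₁ w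
        = (1/μ₀) * Real.exp (-((1/μ₀)*w)) := by
      intro w
      rw [hp₁, hesplit, Real.exp_sub, hexpΔf, hμ₁inv,
        show -((1/μ₀)*w) = -w/μ₀ by ring, Real.exp_neg]
      field_simp
    simp only [hrw]
    rw [MeasureTheory.integral_const_mul, myIntegral hpos3]
    field_simp
  -- variance for p₁
  have hvar₁ : μ₀ < 1 →
      wVar (Ioi 0) p₁ (fun w => Real.exp (w - Δf)) = μ₀ ^ 2 / (1 - μ₀ ^ 2) := by
    intro hlt
    have h1m : (0:ℝ) < 1 - μ₀ := by linarith
    have hposA : (0:ℝ) < (1-μ₀)/μ₀ := div_pos h1m hμ₀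
    have hposC : (0:ℝ) < (1+μ₀)/μ₀ := div_pos h1μ hμ₀
    unfold wVar
    rw [hmean₁]
    have hrw : ∀ w : ℝ, (Real.exp (w - Δf) - 1)^2 * p₁ w
        = (1/(μ₀*(1+μ₀))) * Real.exp (-(((1-μ₀)/μ₀)*w))
          + (-(2/μ₀)) * Real.exp (-((1/μ₀)*w))
          + ((1+μ₀)/μ₀) * Real.exp (-(((1+μ₀)/μ₀)*w)) := by
      intro w
      rw [hp₁, hesplit, Real.exp_sub, hexpΔf, hμ₁inv,
        show -(((1-μ₀)/μ₀)*w) = w + -w/μ₀ by field_simp; ring,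
        show -((1/μ₀)*w) = -w/μ₀ by ring,
        show -(((1+μ₀)/μ₀)*w) = -w + -w/μ₀ by field_simp; ring,
        Real.exp_add, Real.exp_add, Real.exp_neg]
      field_simp
      ring
    simp only [hrw]
    rw [myCombo (1/(μ₀*(1+μ₀))) (-(2/μ₀)) ((1+μ₀)/μ₀) hposA hpos3 hposC]
    have h1m2 : (1:ℝ) - μ₀^2 ≠ 0 := by nlinarith
    field_simp
    ring
  refine ⟨hFT, hvar₀, hvar₁, fun hlt => ?_⟩
  rw [hvar₀, hvar₁ hlt]
  exact div_lt_div_of_pos_left (by positivity) (by nlinarith) (by nlinarith)
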